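/- Let K be a field, k ≥ 2, d ≥ 1, and let H = ([n], E) be a k-uniform hypergraph. Let U = { A ⊆ [n−1] : |A| = k − 1 and A ∪ {n} ∈ E }. Then for every 2 ≤ t ≤ min(|U|, d) and every choice of t pairwise distinct sets A_1, …, A_t ∈ U, the determinant of the t × t matrix whose (r, s) entry is ∏_{i ∈ A_r} y_{is} does not belong to the Lovász–Saks–Schrijver ideal L_H^K(d); in particular it is nonzero in S/L_H^K(d). -/

import Mathlib

open MvPolynomial

/-- The Lovász–Saks–Schrijver ideal `L_H^K(d)` of the hypergraph `H = ([n], E)`: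
the ideal of `K[y_{ij} : i ∈ [n], j ∈ [d]]` generated by the polynomials
`f^{(d)}_e = ∑_{j=1}^d ∏_{i ∈ e} y_{ij}` for `e ∈ E`. -/
noncomputable def lssIdeal (K : Type*) [Field K] {n : ℕ} (d : ℕ)
    (E : Finset (Finset (Fin n))) : Ideal (MvPolynomial (Fin n × Fin d) K) :=
  Ideal.span ((fun e : Finset (Fin n) => ∑ j : Fin d, ∏ i ∈ e, X (i, j)) ''
    (E : Set (Finset (Fin n))))

namespace LSSAux

variable {n d : ℕ}

/-- The set of rows `i` such that the variable `y_{i,j}` occurs in the monomial `m`. -/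
def colSet (m : Fin n × Fin d →₀ ℕ) (j : Fin d) : Finset (Fin n) :=
  Finset.univ.filter fun i => m (i, j) ≠ 0

/-- A monomial is `k`-bad if some column contains at least `k` distinct row variables. -/
def IsBad (k : ℕ) (m : Fin n × Fin d →₀ ℕ) : Prop := ∃ j, k ≤ (colSet m j).card

lemma colSet_mono (m₁ m₂ : Fin n × Fin d →₀ ℕ) (j : Fin d) :
    colSet m₂ j ⊆ colSet (m₁ + m₂) j := by
  intro i hi
  simp only [colSet, Finset.mem_filter, Finset.mem_univ, true_and, Finsupp.add_apply] at *
  exact Finset.mem_filter.2 ⟨Finset.mem_univ _, by omega⟩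

lemma IsBad.add_left {k : ℕ} {m₂ : Fin n × Fin d →₀ ℕ} (m₁ : Fin n × Fin d →₀ ℕ)
    (h : IsBad k m₂) : IsBad k (m₁ + m₂) := by
  obtain ⟨j, hj⟩ := h
  exact ⟨j, hj.trans (Finset.card_le_card (colSet_mono m₁ m₂ j))⟩

/-- The ideal of polynomials all of whose monomials are `k`-bad. -/
def badIdeal (K : Type*) [Field K] (n d k : ℕ) : Ideal (MvPolynomial (Fin n × Fin d) K) where
  carrier := {p | ∀ m ∈ p.support, IsBad k m}
  zero_mem' := by simp
  add_mem' := by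
    intro a b ha hb m hm
    rcases Finset.mem_union.1 (MvPolynomial.support_add hm) with h | h
    · exact ha m h
    · exact hb m h
  smul_mem' := by
    intro c p hp m hm
    rw [smul_eq_mul] at hm
    obtain ⟨m₁, h₁, m₂, h₂, rfl⟩ := Finset.mem_add.1 (MvPolynomial.support_mul _ _ hm)
    exact IsBad.add_left m₁ (hp m₂ h₂)

variable (K : Type*) [Field K]

lemma prod_monomial {α : Type*} (s : Finset α) (f : α → (Fin n × Fin d →₀ ℕ)) :
    (∏ x ∈ s, (monomial (f x) (1 : K))) = monomial (∑ x ∈ s, f x) 1 := by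
  classical
  induction s using Finset.induction_on with
  | empty => simp [monomial_zero']
  | insert _ _ h ih => rw [Finset.prod_insert h, Finset.sum_insert h, ih, monomial_mul, one_mul]

/-- The exponent vector of `∏_{i ∈ F} y_{i,j}`. -/
noncomputable def colMon (F : Finset (Fin n)) (j : Fin d) : Fin n × Fin d →₀ ℕ :=
  ∑ i ∈ F, Finsupp.single (i, j) 1

lemma colMon_apply (F : Finset (Fin n)) (j : Fin d) (i : Fin n) (j' : Fin d) :
    colMon F j (i, j') = if j' = j ∧ i ∈ F then 1 else 0 := by
  classical
  have : colMon F j (i, j') = ∑ i' ∈ F, (Finsupp.single (i', j) (1 : ℕ)) (i, j') :=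
    map_sum (Finsupp.applyAddHom ((i, j') : Fin n × Fin d)) _ F
  rw [this]
  by_cases hj : j' = j
  · subst hj
    by_cases hi : i ∈ F
    · rw [Finset.sum_eq_single i]
      · simp [hi]
      · intro b _ hb; simp [Finsupp.single_apply, Prod.ext_iff, hb]
      · intro h; exact absurd hi h
    · rw [Finset.sum_eq_zero, if_neg (by tauto)]
      intro b hb
      have : b ≠ i := fun h => hi (h ▸ hb)
      simp [Finsupp.single_apply, Prod.ext_iff, this]
  · rw [Finset.sum_eq_zero, if_neg (by tauto)]
    intro b _
    simp only [Finsupp.single_apply, Prod.ext_iff, ite_eq_right_iff, and_imp]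
    exact fun _ h => absurd h.symm hj

lemma prod_X_col (F : Finset (Fin n)) (j : Fin d) :
    (∏ i ∈ F, (X (i, j) : MvPolynomial (Fin n × Fin d) K)) = monomial (colMon F j) 1 := by
  rw [colMon, ← prod_monomial]
  refine Finset.prod_congr rfl fun i _ => ?_
  rw [← X_pow_eq_monomial, pow_one]

lemma colSet_colMon (F : Finset (Fin n)) (j j' : Fin d) :
    colSet (colMon F j) j' = if j' = j then F else ∅ := by
  ext i
  simp only [colSet, Finset.mem_filter, Finset.mem_univ, true_and, colMon_apply]
  by_cases hj : j' = j <;> simp [hj]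

/-- Every generator `f_e` with `|e| = k` lies in the bad ideal. -/
lemma gen_mem_badIdeal (k : ℕ) (e : Finset (Fin n)) (hcard : e.card = k) :
    (∑ j : Fin d, ∏ i ∈ e, X (i, j) : MvPolynomial (Fin n × Fin d) K) ∈
      badIdeal K n d k := by
  classical
  intro m hm
  have hsub := MvPolynomial.support_sum hm
  rw [Finset.mem_biUnion] at hsub
  obtain ⟨j, -, hj⟩ := hsub
  rw [prod_X_col, support_monomial, if_neg (one_ne_zero)] at hj
  rw [Finset.mem_singleton] at hj
  subst hj
  exact ⟨j, by rw [colSet_colMon, if_pos rfl, hcard]⟩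

end LSSAux

/-- Let `H = ([n], E)` be `k`-uniform and let `A_1, …, A_t` be pairwise distinct
`(k-1)`-subsets of `[n-1]` such that `A_r ∪ {n} ∈ E`, where `2 ≤ t ≤ d`.  Then the
determinant of the `t × t` matrix with entries `∏_{i ∈ A_r} y_{is}` does not lie in the
LSS-ideal `L_H^K(d)`; in particular it is nonzero in `S/L_H^K(d)`. -/
theorem det_minor_not_mem_lssIdeal
    (K : Type*) [Field K] (n k d : ℕ) (hk : 2 ≤ k) (hd : 1 ≤ d) (hn : 1 ≤ n)
    (E : Finset (Finset (Fin n))) (hunif : ∀ e ∈ E, e.card = k)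
    (t : ℕ) (ht : 2 ≤ t) (htd : t ≤ d)
    (A : Fin t → Finset (Fin n)) (hinj : Function.Injective A)
    (hU : ∀ r, (A r).card = k - 1 ∧
      (⟨n - 1, Nat.sub_lt hn Nat.one_pos⟩ : Fin n) ∉ A r ∧
      insert (⟨n - 1, Nat.sub_lt hn Nat.one_pos⟩ : Fin n) (A r) ∈ E) :
    (Matrix.of fun r s : Fin t =>
        (∏ i ∈ A r, X (i, Fin.castLE htd s) : MvPolynomial (Fin n × Fin d) K)).det
      ∉ lssIdeal K d E := by
  classical
  open LSSAux in
  intro hmem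
  set c : Fin t → Fin d := Fin.castLE htd with hc
  have hcinj : Function.Injective c := Fin.castLE_injective htd
  -- the LSS ideal is contained in the bad ideal
  have hL : lssIdeal K d E ≤ badIdeal K n d k := by
    rw [lssIdeal, Ideal.span_le]
    rintro p ⟨e, he, rfl⟩
    exact gen_mem_badIdeal K k e (hunif e he)
  have hbad := hL hmem
  -- the exponent vector of the diagonal term of the σ-permuted product
  set B : Equiv.Perm (Fin t) → (Fin n × Fin d →₀ ℕ) :=
    fun σ => ∑ s : Fin t, colMon (A (σ s)) (c s) with hB
  have hBapply : ∀ (σ : Equiv.Perm (Fin t)) (i : Fin n) (j : Fin d),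
      B σ (i, j) = ∑ s : Fin t, (if j = c s ∧ i ∈ A (σ s) then 1 else 0) := by
    intro σ i j
    have : B σ (i, j) = ∑ s : Fin t, colMon (A (σ s)) (c s) (i, j) :=
      map_sum (Finsupp.applyAddHom ((i, j) : Fin n × Fin d)) _ Finset.univ
    rw [this]
    exact Finset.sum_congr rfl fun s _ => colMon_apply _ _ _ _
  have hBc : ∀ (σ : Equiv.Perm (Fin t)) (i : Fin n) (s : Fin t),
      B σ (i, c s) = if i ∈ A (σ s) then 1 else 0 := by
    intro σ i s
    rw [hBapply]
    rw [Finset.sum_eq_single s]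
    · simp
    · intro b _ hb
      have : c s ≠ c b := fun h => hb (hcinj h.symm)
      simp [this]
    · simp
  have hBnc : ∀ (σ : Equiv.Perm (Fin t)) (i : Fin n) (j : Fin d),
      (∀ s, j ≠ c s) → B σ (i, j) = 0 := by
    intro σ i j hj
    rw [hBapply]
    exact Finset.sum_eq_zero fun s _ => by simp [hj s]
  have hcolB : ∀ (σ : Equiv.Perm (Fin t)) (s : Fin t), colSet (B σ) (c s) = A (σ s) := by
    intro σ s
    ext i
    simp [colSet, hBc]
  -- B is injective (as a function of σ)
  have hBinj : ∀ σ : Equiv.Perm (Fin t), B σ = B 1 → σ = 1 := by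
    intro σ hσ
    ext s
    have := hcolB σ s
    rw [hσ, hcolB 1 s] at this
    have h2 : σ s = s := by have h3 := hinj this; simpa using h3.symm
    simp [h2]
  -- the determinant as a sum of monomials
  set M := Matrix.of fun r s : Fin t =>
      (∏ i ∈ A r, X (i, c s) : MvPolynomial (Fin n × Fin d) K) with hM
  have hdet : M.det = ∑ σ : Equiv.Perm (Fin t),
      Equiv.Perm.sign σ • (monomial (B σ) (1 : K)) := by
    rw [Matrix.det_apply]
    refine Finset.sum_congr rfl fun σ _ => ?_
    congr 1
    have : (∏ s : Fin t, M (σ s) s) =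
        ∏ s : Fin t, (monomial (colMon (A (σ s)) (c s)) (1 : K)) := by
      refine Finset.prod_congr rfl fun s _ => ?_
      rw [hM, Matrix.of_apply, prod_X_col]
    rw [this, prod_monomial]
  -- the coefficient of B 1 in det M is 1
  have hcoeff : coeff (B 1) M.det = 1 := by
    rw [hdet, MvPolynomial.coeff_sum]
    rw [Finset.sum_eq_single (1 : Equiv.Perm (Fin t))]
    · rw [MvPolynomial.coeff_smul, coeff_monomial, if_pos rfl]
      simp
    · intro σ _ hσ
      rw [MvPolynomial.coeff_smul, coeff_monomial,
        if_neg (fun h => hσ (hBinj σ h)), smul_zero]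
    · simp
  have hsupp : B 1 ∈ M.det.support := by
    rw [MvPolynomial.mem_support_iff, hcoeff]
    exact one_ne_zero
  -- but B 1 is not bad
  obtain ⟨j, hj⟩ := hbad (B 1) hsupp
  by_cases hex : ∃ s, j = c s
  · obtain ⟨s, rfl⟩ := hex
    rw [hcolB 1 s] at hj
    simp only [Equiv.Perm.one_apply] at hj
    rw [(hU s).1] at hj
    omega
  · push_neg at hex
    have : colSet (B 1) j = ∅ := by
      ext i
      simp [colSet, hBnc 1 i j hex]
    rw [this] at hj
    simp at hj
    omega
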